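/- Let G be a group, N' and N normal subgroups of G with N' ≤ N, and K a normal subgroup of G such that the index [K ∩ N : K ∩ N'] is finite. Let π : ℤ[G/N'] → ℤ[G/N] be the canonical map induced by the surjection G/N' → G/N. If x ∈ ℤ[G/N'] is fixed by every element of K (for the action of G by left multiplication on cosets), then every coefficient of π(x) is divisible by [K ∩ N : K ∩ N']; that is, the image of the K-invariants of ℤ[G/N'] in ℤ[G/N] consists of [K ∩ N : K ∩ N']-multiples. -/

import Mathlib

/-- The canonical map of coset spaces `G ⧸ S → G ⧸ T` induced by an inclusion `S ≤ T` of
subgroups, sending `gS` to `gT`. -/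
def quotMap {G : Type} [Group G] {S T : Subgroup G} (h : S ≤ T) : G ⧸ S → G ⧸ T :=
  Quotient.map' id fun _ _ hab =>
    QuotientGroup.leftRel_apply.mpr (h (QuotientGroup.leftRel_apply.mp hab))

/-- **(Chirvasitu–Kanda, key divisibility step in Theorem 2.1.)** Let `G` be a group,
`N' ≤ N` and `K` normal subgroups of `G` with `[K ∩ N : K ∩ N']` finite, and let
`π : ℤ[G/N'] → ℤ[G/N]` be the canonical map. If `x ∈ ℤ[G/N']` is fixed by every element of
`K` (for the `G`-action by left multiplication on cosets extended linearly), then every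
coefficient of `π(x)` is divisible by `[K ∩ N : K ∩ N']`. -/
theorem stmt_10 (G : Type) [Group G] (N' N K : Subgroup G)
    [N'.Normal] [N.Normal] [K.Normal] (hNN : N' ≤ N)
    (hfin : (K ⊓ N').relIndex (K ⊓ N) ≠ 0)
    (x : (G ⧸ N') →₀ ℤ)
    (hx : ∀ g ∈ K, Finsupp.mapDomain (fun c : G ⧸ N' => g • c) x = x) :
    ∀ c : G ⧸ N, ((K ⊓ N').relIndex (K ⊓ N) : ℤ) ∣ Finsupp.mapDomain (quotMap hNN) x c := by
  classical
  intro c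
  set n := (K ⊓ N').relIndex (K ⊓ N) with hn
  set H := K ⊓ N with hH
  -- pointwise invariance
  have hxval : ∀ g ∈ K, ∀ a : G ⧸ N', x (g • a) = x a := by
    intro g hg a
    have h := Finsupp.mapDomain_apply (MulAction.injective g) x a
    rw [hx g hg] at h
    exact h
  -- quotMap commutes with smul
  have hqsmul : ∀ (g : G) (a : G ⧸ N'), quotMap hNN (g • a) = g • quotMap hNN a := by
    intro g a
    induction a using QuotientGroup.induction_on with
    | H h => rfl
  -- N acts trivially on G ⧸ N
  have hNtriv : ∀ k ∈ N, ∀ b : G ⧸ N, k • b = b := by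
    intro k hk b
    induction b using QuotientGroup.induction_on with
    | H h =>
      show QuotientGroup.mk (k * h) = QuotientGroup.mk h
      rw [QuotientGroup.eq]
      have : h⁻¹ * k⁻¹ * h ∈ N := Subgroup.Normal.conj_mem' ‹N.Normal› k⁻¹ (inv_mem hk) h
      simpa [mul_assoc] using this
  -- stabilizer of any point of G ⧸ N' in H is N'.subgroupOf H
  have hstab : ∀ a : G ⧸ N', MulAction.stabilizer H a = N'.subgroupOf H := by
    intro a
    ext k
    induction a using QuotientGroup.induction_on with
    | H h =>
      simp only [MulAction.mem_stabilizer_iff, Subgroup.mem_subgroupOf]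
      change (k : G) • (QuotientGroup.mk h : G ⧸ N') = _ ↔ _
      show QuotientGroup.mk ((k : G) * h) = QuotientGroup.mk h ↔ _
      rw [QuotientGroup.eq]
      constructor
      · intro hmem
        have : h * (((k : G) * h)⁻¹ * h) * h⁻¹ ∈ N' := Subgroup.Normal.conj_mem ‹N'.Normal› _ hmem h
        simpa [mul_assoc] using inv_mem this
      · intro hmem
        have : h⁻¹ * (k : G)⁻¹ * h ∈ N' := Subgroup.Normal.conj_mem' ‹N'.Normal› _ (inv_mem hmem) h
        simpa [mul_assoc] using this
  have hK : ∀ k : H, (k : G) ∈ K := fun k => (Subgroup.mem_inf.mp k.2).1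
  have hNm : ∀ k : H, (k : G) ∈ N := fun k => (Subgroup.mem_inf.mp k.2).2
  have hsubOf : N'.subgroupOf H = (K ⊓ N').subgroupOf (K ⊓ N) := by
    ext k
    simp only [Subgroup.mem_subgroupOf, Subgroup.mem_inf]
    exact ⟨fun h' => ⟨hK k, h'⟩, fun h' => h'.2⟩
  have hidx : (N'.subgroupOf H).index = n := by rw [hsubOf]; rfl
  -- finiteness of orbits
  have hfinQ : Finite (H ⧸ N'.subgroupOf H) := by
    apply Nat.finite_of_card_ne_zero
    rw [show Nat.card (H ⧸ N'.subgroupOf H) = (N'.subgroupOf H).index from rfl, hidx]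
    exact hfin
  have horbcard : ∀ a : G ⧸ N', (MulAction.orbit H a).Finite ∧ Nat.card (MulAction.orbit H a) = n := by
    intro a
    have e := MulAction.orbitEquivQuotientStabilizer H a
    rw [hstab a] at e
    have : Finite ↥(MulAction.orbit H a) := Finite.of_equiv _ e.symm
    refine ⟨Set.toFinite _, ?_⟩
    rw [Nat.card_congr e, ← hidx]; rfl
  -- key induction
  have key : ∀ s : Finset (G ⧸ N'), (∀ (k : H), ∀ a ∈ s, (k : G) • a ∈ s) →
      (n : ℤ) ∣ ∑ a ∈ s, x a := by
    intro s
    induction s using Finset.strongInduction with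
    | _ s ih =>
      intro hs
      rcases s.eq_empty_or_nonempty with rfl | ⟨a, ha⟩
      · simp
      · obtain ⟨horbfin, horbn⟩ := horbcard a
        set O := horbfin.toFinset with hO
        have hmemO : ∀ b, b ∈ O ↔ b ∈ MulAction.orbit H a := fun b => horbfin.mem_toFinset
        have hOsub : O ⊆ s := by
          intro b hb
          rw [hmemO] at hb
          obtain ⟨k, rfl⟩ := hb
          show k • a ∈ s
          change (k : G) • a ∈ s
          exact hs k a ha
        have haO : a ∈ O := (hmemO a).mpr (MulAction.mem_orbit_self a)
        have hOcard : O.card = n := by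
          rw [← horbn, Nat.card_coe_set_eq, Set.ncard_eq_toFinset_card _ horbfin]
        have hconst : ∀ b ∈ O, x b = x a := by
          intro b hb
          rw [hmemO] at hb
          obtain ⟨k, rfl⟩ := hb
          show x (k • a) = x a
          change x ((k : G) • a) = x a
          exact hxval (k : G) (hK k) a
        have hOsum : ∑ b ∈ O, x b = (n : ℤ) * x a := by
          rw [Finset.sum_congr rfl hconst, Finset.sum_const, hOcard, nsmul_eq_mul]
        have hOclosed : ∀ (k : H), ∀ b ∈ s \ O, (k : G) • b ∈ s \ O := by
          intro k b hb
          rw [Finset.mem_sdiff] at hb ⊢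
          refine ⟨hs k b hb.1, fun hmem => hb.2 ?_⟩
          rw [hmemO] at hmem ⊢
          obtain ⟨m, hm⟩ := hmem
          refine ⟨k⁻¹ * m, ?_⟩
          show (k⁻¹ * m) • a = b
          have hm' : m • a = (k : G) • b := hm
          change (m : G) • a = (k : G) • b at hm'
          change ((k⁻¹ * m : H) : G) • a = b
          rw [Subgroup.coe_mul, Subgroup.coe_inv, mul_smul, hm', inv_smul_smul]
        have hss : s \ O ⊂ s :=
          Finset.sdiff_ssubset hOsub ⟨a, haO⟩
        have hrest := ih (s \ O) hss (fun k b hb => hOclosed k b hb)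
        have hsplit : ∑ b ∈ s, x b = ∑ b ∈ s \ O, x b + ∑ b ∈ O, x b :=
          (Finset.sum_sdiff hOsub).symm
        rw [hsplit, hOsum]
        exact dvd_add hrest (Dvd.intro _ rfl)
  -- coefficient formula
  have hcoef : Finsupp.mapDomain (quotMap hNN) x c
      = ∑ a ∈ x.support.filter (fun a => quotMap hNN a = c), x a := by
    rw [Finsupp.mapDomain, Finsupp.sum_apply, Finsupp.sum, Finset.sum_filter]
    exact Finset.sum_congr rfl fun a _ => Finsupp.single_apply
  rw [hcoef]
  apply key
  intro k a ha
  rw [Finset.mem_filter] at ha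
  rw [Finset.mem_filter, Finsupp.mem_support_iff]
  refine ⟨?_, ?_⟩
  · rw [hxval (k : G) (hK k) a]
    exact Finsupp.mem_support_iff.mp ha.1
  · rw [hqsmul, ha.2]
    exact hNtriv (k : G) (hNm k) c
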